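/- Let Γ be a finite nonempty set of d×d matrices over Z_max. Then urk(Γ) = 0 if and only if ρ(Γ) = -∞, i.e., the minimum ultimate rank over the semigroup generated by Γ is zero exactly when some finite product of matrices from Γ has all entries equal to -∞ (mortality of the semigroup). -/

import Mathlib

open Filter

/-- The tropical (max-plus) semiring ℤ ∪ {-∞}: addition is max (lattice sup),
`+` is the tropical product with `⊥` absorbing. -/
abbrev Zmax : Type := WithBot ℤ

/-- Square matrices over `Zmax`. -/
abbrev Mat (d : ℕ) : Type := Fin d → Fin d → Zmax

/-- Tropical matrix product: `(A⊗B) i j = max_k (A i k + B k j)`. -/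
def tmul {d : ℕ} (A B : Mat d) : Mat d :=
  fun i j => Finset.univ.sup fun k => A i k + B k j

/-- Maximal entry of a matrix (`-∞` for the all-`⊥` matrix). -/
def tnorm {d : ℕ} (M : Mat d) : Zmax :=
  Finset.univ.sup fun i => Finset.univ.sup fun j => M i j

/-- Product of a list of matrices (junk value, the all-`⊥` matrix, on `[]`;
only used on nonempty lists). -/
def prodL {d : ℕ} : List (Mat d) → Mat d
  | [] => fun _ _ => ⊥
  | [M] => M
  | M :: N :: L => tmul M (prodL (N :: L))

/-- Tropical identity matrix. -/
def tId (d : ℕ) : Mat d := fun i j => if i = j then (0 : Zmax) else ⊥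

/-- Tropical matrix power. -/
def tpow {d : ℕ} (M : Mat d) : ℕ → Mat d
  | 0 => tId d
  | n+1 => tmul M (tpow M n)

/-- The subsemigroup generated by a set of matrices: all nonempty finite products. -/
def semi {d : ℕ} (Γ : Set (Mat d)) : Set (Mat d) :=
  {M | ∃ L : List (Mat d), L ≠ [] ∧ (∀ N ∈ L, N ∈ Γ) ∧ prodL L = M}

/-- Embedding of `Zmax = ℤ ∪ {-∞}` into `EReal`. -/
noncomputable def z2e (x : Zmax) : EReal :=
  WithBot.recBotCoe ⊥ (fun n : ℤ => ((n : ℝ) : EReal)) x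

/-- `minNorm Γ ℓ` is the minimum over all products of `ℓ` matrices from `Γ`
of `‖M₁⋯M_ℓ‖_∞ / ℓ`, as an extended real. -/
noncomputable def minNorm {d : ℕ} (Γ : Set (Mat d)) (ℓ : ℕ) : EReal :=
  sInf {x | ∃ L : List (Mat d), L.length = ℓ ∧ (∀ N ∈ L, N ∈ Γ) ∧
    x = z2e (tnorm (prodL L)) / (ℓ : EReal)}

/-- Joint spectral radius: `inf_{ℓ>0} min{ ‖M₁⋯M_ℓ‖_∞/ℓ : Mᵢ ∈ Γ }`. -/
noncomputable def jsr {d : ℕ} (Γ : Set (Mat d)) : EReal :=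
  ⨅ (ℓ : ℕ) (_ : 0 < ℓ), minNorm Γ ℓ

/-- Weight of the cycle `c 0 → c 1 → ⋯ → c ℓ → c 0` (length `ℓ+1`),
addition of `Fin (ℓ+1)` being cyclic. -/
def cycWeight {d : ℕ} (M : Mat d) {ℓ : ℕ} (c : Fin (ℓ+1) → Fin d) : Zmax :=
  ∑ k : Fin (ℓ+1), M (c k) (c (k+1))

/-- Tropical spectral radius of a single matrix: the maximal average weight of
cycles in the graph of `M` (and `-∞` if there is no cycle of finite weight). -/
noncomputable def rho {d : ℕ} (M : Mat d) : EReal :=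
  ⨆ (ℓ : ℕ) (c : Fin (ℓ+1) → Fin d), z2e (cycWeight M c) / ((ℓ+1 : ℕ) : EReal)

/-- A critical cycle: a cycle with finite weight whose average weight is `rho M`. -/
def IsCritCycle {d : ℕ} (M : Mat d) {ℓ : ℕ} (c : Fin (ℓ+1) → Fin d) : Prop :=
  cycWeight M c ≠ ⊥ ∧ z2e (cycWeight M c) / ((ℓ+1 : ℕ) : EReal) = rho M

/-- Edges of the critical graph: edges lying on some critical cycle. -/
def critEdge {d : ℕ} (M : Mat d) (i j : Fin d) : Prop :=
  ∃ (ℓ : ℕ) (c : Fin (ℓ+1) → Fin d) (k : Fin (ℓ+1)),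
    IsCritCycle M c ∧ c k = i ∧ c (k+1) = j

/-- Vertices of the critical graph. -/
def critVertex {d : ℕ} (M : Mat d) (i : Fin d) : Prop :=
  ∃ j, critEdge M i j ∨ critEdge M j i

/-- Strongly connected components of the critical graph: maximal sets of critical
vertices that are pairwise connected by paths in the critical graph. -/
def IsSCC {d : ℕ} (M : Mat d) (S : Set (Fin d)) : Prop :=
  (∀ i ∈ S, critVertex M i) ∧
  (∀ i ∈ S, ∀ j ∈ S, Relation.ReflTransGen (critEdge M) i j) ∧
  (∀ T : Set (Fin d), S ⊆ T → (∀ i ∈ T, critVertex M i) →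
    (∀ i ∈ T, ∀ j ∈ T, Relation.ReflTransGen (critEdge M) i j) → T = S)

/-- Greatest common divisor of a set of natural numbers. -/
noncomputable def setGcd (A : Set ℕ) : ℕ :=
  sInf {g | (∀ a ∈ A, g ∣ a) ∧ ∀ h, (∀ a ∈ A, h ∣ a) → h ∣ g}

/-- Cyclicity of a strongly connected component `S` of the critical graph of `M`:
the gcd of the lengths of the cycles of the critical graph lying in `S`. -/
noncomputable def cyclicity {d : ℕ} (M : Mat d) (S : Set (Fin d)) : ℕ :=
  setGcd {n | ∃ (ℓ : ℕ) (c : Fin (ℓ+1) → Fin d), n = ℓ + 1 ∧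
    (∀ k, critEdge M (c k) (c (k+1))) ∧ (∀ k, c k ∈ S)}

/-- Ultimate rank of a matrix: the sum of the cyclicities of the strongly
connected components of its critical graph. -/
noncomputable def urk {d : ℕ} (M : Mat d) : ℕ :=
  ∑ᶠ (S : Set (Fin d)) (_ : IsSCC M S), cyclicity M S

/-- `k ⊙ M`: add the integer `k` to every entry. -/
def kadd {d : ℕ} (k : ℤ) (M : Mat d) : Mat d := fun i j => (k : Zmax) + M i j

/-- Value `I M F` computed from an initial row vector, a matrix and a final
column vector. -/
def runVal {d : ℕ} (I : Fin d → Zmax) (M : Mat d) (F : Fin d → Zmax) : Zmax :=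
  Finset.univ.sup fun i => Finset.univ.sup fun j => I i + M i j + F j

section Helpers
variable {d : ℕ}

lemma z2e_bot : z2e (⊥ : Zmax) = ⊥ := rfl
lemma z2e_coe (z : ℤ) : z2e (z : Zmax) = ((z : ℝ) : EReal) := rfl

lemma z2e_mono : Monotone z2e := by
  intro x y h
  induction x using WithBot.recBotCoe with
  | bot => rw [z2e_bot]; exact bot_le
  | coe a =>
    induction y using WithBot.recBotCoe with
    | bot => exact absurd h (by simp)
    | coe b =>
      rw [z2e_coe, z2e_coe]
      exact_mod_cast WithBot.coe_le_coe.1 h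

lemma zmax_add_sup (a : Zmax) (s : Finset (Fin d)) (f : Fin d → Zmax) :
    a + s.sup f = s.sup fun x => a + f x := by
  induction s using Finset.cons_induction with
  | empty => simp
  | cons i s hi ih =>
    rw [Finset.sup_cons, Finset.sup_cons, ← ih]
    rcases le_total (f i) (s.sup f) with h | h
    · rw [sup_eq_right.2 h, sup_eq_right.2 (add_le_add_right h a)]
    · rw [sup_eq_left.2 h, sup_eq_left.2 (add_le_add_right h a)]

lemma zmax_sup_add (a : Zmax) (s : Finset (Fin d)) (f : Fin d → Zmax) :
    s.sup f + a = s.sup fun x => f x + a := by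
  induction s using Finset.cons_induction with
  | empty => simp
  | cons i s hi ih =>
    rw [Finset.sup_cons, Finset.sup_cons, ← ih]
    rcases le_total (f i) (s.sup f) with h | h
    · rw [sup_eq_right.2 h, sup_eq_right.2 (add_le_add_left h a)]
    · rw [sup_eq_left.2 h, sup_eq_left.2 (add_le_add_left h a)]

lemma tmul_assoc (A B C : Mat d) : tmul (tmul A B) C = tmul A (tmul B C) := by
  funext i j
  show Finset.univ.sup (fun l => (Finset.univ.sup fun k => A i k + B k l) + C l j)
      = Finset.univ.sup fun k => A i k + Finset.univ.sup fun l => B k l + C l j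
  have h1 : ∀ l, (Finset.univ.sup fun k => A i k + B k l) + C l j
      = Finset.univ.sup fun k => A i k + B k l + C l j := fun l =>
    zmax_sup_add (C l j) Finset.univ _
  have h2 : ∀ k, A i k + Finset.univ.sup (fun l => B k l + C l j)
      = Finset.univ.sup fun l => A i k + (B k l + C l j) := fun k =>
    zmax_add_sup (A i k) Finset.univ _
  simp only [h1, h2]
  rw [Finset.sup_comm]
  congr 1; funext k; congr 1; funext l; rw [add_assoc]

lemma tmul_tId (M : Mat d) : tmul M (tId d) = M := by
  funext i j
  apply le_antisymm
  · apply Finset.sup_le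
    intro k _
    by_cases h : k = j
    · subst h; simp [tId]
    · simp [tId, h]
  · calc M i j = M i j + tId d j j := by simp [tId]
      _ ≤ _ := Finset.le_sup (f := fun k => M i k + tId d k j) (Finset.mem_univ j)

lemma prodL_cons (M : Mat d) (L : List (Mat d)) (h : L ≠ []) :
    prodL (M :: L) = tmul M (prodL L) := by
  cases L with
  | nil => exact absurd rfl h
  | cons N L' => rfl

lemma prodL_append (L₁ L₂ : List (Mat d)) (h₁ : L₁ ≠ []) (h₂ : L₂ ≠ []) :
    prodL (L₁ ++ L₂) = tmul (prodL L₁) (prodL L₂) := by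
  induction L₁ with
  | nil => exact absurd rfl h₁
  | cons M L₁' ih =>
    cases L₁' with
    | nil => exact prodL_cons M L₂ h₂
    | cons N L₁'' =>
      have hne : (N :: L₁'') ++ L₂ ≠ [] := by simp
      rw [List.cons_append, prodL_cons _ _ hne, ih (by simp), ← tmul_assoc]
      rfl

end Helpers
section Helpers2
variable {d : ℕ}

lemma join_replicate_ne_nil {L : List (Mat d)} (hL : L ≠ []) {n : ℕ} (hn : 0 < n) :
    (List.replicate n L).flatten ≠ [] := by
  cases n with
  | zero => omega
  | succ m =>
    rw [List.replicate_succ, List.flatten_cons]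
    simp [hL]

lemma tpow_join (L : List (Mat d)) (hL : L ≠ []) :
    ∀ n, 0 < n → tpow (prodL L) n = prodL (List.replicate n L).flatten := by
  intro n
  induction n with
  | zero => omega
  | succ m ih =>
    intro _
    rcases Nat.eq_zero_or_pos m with hm | hm
    · subst hm
      show tmul (prodL L) (tpow (prodL L) 0) = _
      rw [show tpow (prodL L) 0 = tId d from rfl, tmul_tId]
      simp
    · show tmul (prodL L) (tpow (prodL L) m) = _
      rw [ih hm, List.replicate_succ, List.flatten_cons,
        prodL_append L _ hL (join_replicate_ne_nil hL hm)]

lemma semi_tpow {Γ : Set (Mat d)} {M : Mat d} (hM : M ∈ semi Γ) {n : ℕ} (hn : 0 < n) :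
    tpow M n ∈ semi Γ := by
  obtain ⟨L, hL, hmem, rfl⟩ := hM
  refine ⟨(List.replicate n L).flatten, join_replicate_ne_nil hL hn, ?_, (tpow_join L hL n hn).symm⟩
  intro N hN
  rw [List.mem_flatten] at hN
  obtain ⟨l, hl, hNl⟩ := hN
  rw [List.eq_of_mem_replicate hl] at hNl
  exact hmem N hNl

lemma tpow_path (M : Mat d) : ∀ n i j, tpow M n i j ≠ ⊥ →
    ∃ p : ℕ → Fin d, p 0 = i ∧ p n = j ∧ ∀ k < n, M (p k) (p (k+1)) ≠ ⊥ := by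
  intro n
  induction n with
  | zero =>
    intro i j h
    have : i = j := by
      by_contra hij
      exact h (by simp [tpow, tId, hij])
    subst this
    exact ⟨fun _ => i, rfl, rfl, by omega⟩
  | succ m ih =>
    intro i j h
    have e : tpow M (m+1) i j = Finset.univ.sup fun k => M i k + tpow M m k j := rfl
    rw [e] at h
    have : ∃ k, M i k + tpow M m k j ≠ ⊥ := by
      by_contra hall
      push_neg at hall
      exact h ((Finset.sup_eq_bot_iff _ Finset.univ).2 fun k _ => hall k)
    obtain ⟨k, hk⟩ := this
    rw [ne_eq, WithBot.add_eq_bot] at hk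
    push_neg at hk
    obtain ⟨p, hp0, hpm, hpe⟩ := ih k j hk.2
    refine ⟨fun t => if t = 0 then i else p (t-1), by simp, by simp [hpm], ?_⟩
    intro t ht
    cases t with
    | zero => simpa [hp0] using hk.1
    | succ s => simpa using hpe s (by omega)

lemma cycWeight_ne_bot_iff (M : Mat d) {ℓ : ℕ} (c : Fin (ℓ+1) → Fin d) :
    cycWeight M c ≠ ⊥ ↔ ∀ k, M (c k) (c (k+1)) ≠ ⊥ := by
  rw [cycWeight, ne_eq, WithBot.sum_eq_bot_iff]
  simp

lemma path_cycle_aux (M : Mat d) (p : ℕ → Fin d)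
    (h : ∀ k < d, M (p k) (p (k+1)) ≠ ⊥) {a b : ℕ} (hab : a < b) (hbd : b ≤ d)
    (hpp : p a = p b) :
    ∃ (ℓ : ℕ) (c : Fin (ℓ+1) → Fin d), cycWeight M c ≠ ⊥ := by
  obtain ⟨m, rfl⟩ : ∃ m, b = a + m + 1 := ⟨b - a - 1, by omega⟩
  refine ⟨m, fun k => p (a + k.val), ?_⟩
  rw [cycWeight_ne_bot_iff]
  intro k
  rcases eq_or_ne k (Fin.last m) with hk | hk
  · subst hk
    show M (p (a + (Fin.last m).val)) (p (a + (Fin.last m + 1).val)) ≠ ⊥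
    rw [Fin.last_add_one, Fin.val_last]
    show M (p (a + m)) (p (a + (0 : Fin (m+1)).val)) ≠ ⊥
    rw [Fin.val_zero, Nat.add_zero, hpp]
    have : a + m + 1 = a + m + 1 := rfl
    exact h (a + m) (by omega)
  · have hv : (k + 1).val = k.val + 1 := by
      rw [Fin.val_add_one, if_neg hk]
    show M (p (a + k.val)) (p (a + (k+1).val)) ≠ ⊥
    rw [hv, show a + (k.val + 1) = (a + k.val) + 1 by omega]
    have hkm : k.val < m := by
      have := k.isLt
      rcases Nat.lt_or_ge k.val m with h' | h'
      · exact h'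
      · exact absurd (Fin.eq_of_val_eq (by simp [Fin.val_last]; omega)) hk
    exact h (a + k.val) (by omega)

lemma path_cycle (M : Mat d) (p : ℕ → Fin d)
    (h : ∀ k < d, M (p k) (p (k+1)) ≠ ⊥) :
    ∃ (ℓ : ℕ) (c : Fin (ℓ+1) → Fin d), cycWeight M c ≠ ⊥ := by
  have : ¬ Function.Injective (fun t : Fin (d+1) => p t.val) := by
    intro hinj
    have := Fintype.card_le_of_injective _ hinj
    simp at this
  rw [Function.not_injective_iff] at this
  obtain ⟨a, b, hab, hne⟩ := this
  rcases Nat.lt_or_ge a.val b.val with hlt | hge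
  · exact path_cycle_aux M p h hlt b.is_le hab
  · have hv : a.val ≠ b.val := fun e => hne (Fin.val_injective e)
    have hlt : b.val < a.val := by omega
    exact path_cycle_aux M p h hlt a.is_le hab.symm

end Helpers2
section Helpers3
variable {d : ℕ}

lemma mortal_cycWeight {M : Mat d} (h : ∀ i j, M i j = ⊥) {ℓ : ℕ} (c : Fin (ℓ+1) → Fin d) :
    cycWeight M c = ⊥ :=
  WithBot.sum_eq_bot_iff.2 ⟨0, Finset.mem_univ _, h _ _⟩

lemma no_critEdge_of_no_cycle {M : Mat d}
    (h : ∀ (ℓ : ℕ) (c : Fin (ℓ+1) → Fin d), cycWeight M c = ⊥)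
    (i j : Fin d) : ¬ critEdge M i j := by
  rintro ⟨ℓ, c, k, ⟨hc, -⟩, -, -⟩
  exact hc (h ℓ c)

lemma cyclicity_eq_zero {M : Mat d} (h : ∀ i j, ¬ critEdge M i j) (S : Set (Fin d)) :
    cyclicity M S = 0 := by
  have he : {n | ∃ (ℓ : ℕ) (c : Fin (ℓ+1) → Fin d), n = ℓ + 1 ∧
      (∀ k, critEdge M (c k) (c (k+1))) ∧ (∀ k, c k ∈ S)} = ∅ := by
    ext n
    simp only [Set.mem_setOf_eq, Set.mem_empty_iff_false, iff_false]
    rintro ⟨ℓ, c, -, hedge, -⟩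
    exact h _ _ (hedge 0)
  rw [cyclicity, he]
  have h0 : (0:ℕ) ∈ {g | (∀ a ∈ (∅ : Set ℕ), g ∣ a) ∧ ∀ h', (∀ a ∈ (∅ : Set ℕ), h' ∣ a) → h' ∣ g} :=
    ⟨fun a ha => ha.elim, fun h' _ => dvd_zero h'⟩
  exact Nat.sInf_eq_zero.2 (Or.inl h0)

lemma urk_eq_zero_of_no_critEdge {M : Mat d} (h : ∀ i j, ¬ critEdge M i j) : urk M = 0 := by
  rw [urk]
  apply finsum_eq_zero_of_forall_eq_zero
  intro S
  rw [cyclicity_eq_zero h S]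
  exact finsum_zero

lemma urk_eq_zero_of_mortal {M : Mat d} (h : ∀ i j, M i j = ⊥) : urk M = 0 :=
  urk_eq_zero_of_no_critEdge (no_critEdge_of_no_cycle (fun _ c => mortal_cycWeight h c))

lemma exists_gcd (A : Set ℕ) : ∃ g, (∀ a ∈ A, g ∣ a) ∧ ∀ h, (∀ a ∈ A, h ∣ a) → h ∣ g := by
  obtain ⟨z, hz⟩ := Int.subgroup_cyclic (AddSubgroup.closure ((fun n : ℕ => (n : ℤ)) '' A))
  refine ⟨z.natAbs, ?_, ?_⟩
  · intro a ha
    have hmem : (a : ℤ) ∈ AddSubgroup.closure {z} := by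
      rw [← hz]
      exact AddSubgroup.subset_closure ⟨a, ha, rfl⟩
    rw [AddSubgroup.mem_closure_singleton] at hmem
    obtain ⟨n, hn⟩ := hmem
    have hdvd : z ∣ (a : ℤ) := by
      rw [← hn]
      simpa [zsmul_eq_mul, Int.cast_id] using dvd_mul_left z n
    have := Int.natAbs_dvd_natAbs.2 hdvd
    simpa using this
  · intro h hall
    have hzin : z ∈ AddSubgroup.closure ((fun n : ℕ => (n : ℤ)) '' A) := by
      rw [hz]
      exact AddSubgroup.subset_closure rfl
    have hdvd : (h : ℤ) ∣ z := by
      refine AddSubgroup.closure_induction ?_ (dvd_zero _) (fun x y _ _ hx hy => dvd_add hx hy)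
        (fun x _ hx => (dvd_neg).2 hx) hzin
      rintro x ⟨a, ha, rfl⟩
      exact Int.natCast_dvd_natCast.2 (hall a ha)
    have := Int.natAbs_dvd_natAbs.2 hdvd
    simpa using this

lemma setGcd_pos {A : Set ℕ} {a : ℕ} (ha : a ∈ A) (hpos : ∀ x ∈ A, 0 < x) :
    0 < setGcd A := by
  obtain ⟨g, hg⟩ := exists_gcd A
  rw [setGcd]
  rcases Nat.eq_zero_or_pos (sInf {g | (∀ a ∈ A, g ∣ a) ∧ ∀ h, (∀ a ∈ A, h ∣ a) → h ∣ g})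
    with h0 | h' 
  · exfalso
    rcases Nat.sInf_eq_zero.1 h0 with hin | hemp
    · have := hin.1 a ha
      rw [zero_dvd_iff] at this
      exact (hpos a ha).ne' this
    · rw [Set.eq_empty_iff_forall_notMem] at hemp
      exact hemp g hg
  · exact h'

end Helpers3
section Helpers4
variable {d : ℕ}
open Fin.NatCast

lemma critEdge_of_critCycle {M : Mat d} {ℓ : ℕ} {c : Fin (ℓ+1) → Fin d}
    (hc : IsCritCycle M c) (k : Fin (ℓ+1)) : critEdge M (c k) (c (k+1)) :=
  ⟨ℓ, c, k, hc, rfl, rfl⟩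

lemma rtg_along_cycle {M : Mat d} {ℓ : ℕ} {c : Fin (ℓ+1) → Fin d}
    (hc : ∀ k, critEdge M (c k) (c (k+1))) (a : Fin (ℓ+1)) (t : ℕ) :
    Relation.ReflTransGen (critEdge M) (c a) (c (a + (t : Fin (ℓ+1)))) := by
  induction t with
  | zero => simpa using Relation.ReflTransGen.refl
  | succ s ih =>
    have : ((s+1 : ℕ) : Fin (ℓ+1)) = (s : Fin (ℓ+1)) + 1 := by push_cast; ring
    rw [this, ← add_assoc]
    exact ih.tail (hc _)

lemma rtg_cycle {M : Mat d} {ℓ : ℕ} {c : Fin (ℓ+1) → Fin d}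
    (hc : ∀ k, critEdge M (c k) (c (k+1))) (a b : Fin (ℓ+1)) :
    Relation.ReflTransGen (critEdge M) (c a) (c b) := by
  have := rtg_along_cycle hc a (b - a).val
  rwa [Fin.cast_val_eq_self, add_comm, sub_add_cancel] at this

lemma urk_ne_zero_of_critCycle {M : Mat d} {ℓ : ℕ} {c : Fin (ℓ+1) → Fin d}
    (hc : IsCritCycle M c) : urk M ≠ 0 := by
  classical
  set v := c 0 with hv
  have hedge : ∀ k, critEdge M (c k) (c (k+1)) := critEdge_of_critCycle hc
  have hcv : ∀ k, critVertex M (c k) := fun k => ⟨c (k+1), Or.inl (hedge k)⟩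
  set S : Set (Fin d) := {u | critVertex M u ∧
    Relation.ReflTransGen (critEdge M) v u ∧ Relation.ReflTransGen (critEdge M) u v} with hS
  have hvS : v ∈ S := ⟨hcv 0, Relation.ReflTransGen.refl, Relation.ReflTransGen.refl⟩
  have hSCC : IsSCC M S := by
    refine ⟨fun u hu => hu.1, fun i hi j hj => hi.2.2.trans hj.2.1, ?_⟩
    intro T hST hTcrit hTconn
    apply Set.Subset.antisymm _ hST
    intro u hu
    exact ⟨hTcrit u hu, hTconn v (hST hvS) u hu, hTconn u hu v (hST hvS)⟩
  have hcS : ∀ k, c k ∈ S := fun k => ⟨hcv k, rtg_cycle hedge 0 k, rtg_cycle hedge k 0⟩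
  have hcyc : 0 < cyclicity M S := by
    refine setGcd_pos (A := {n | ∃ (ℓ' : ℕ) (c' : Fin (ℓ'+1) → Fin d), n = ℓ' + 1 ∧
      (∀ k, critEdge M (c' k) (c' (k+1))) ∧ (∀ k, c' k ∈ S)})
      (a := ℓ + 1) ⟨ℓ, c, rfl, hedge, hcS⟩ ?_
    rintro x ⟨ℓ', c', rfl, -, -⟩
    omega
  have hle : cyclicity M S ≤ urk M := by
    rw [urk]
    have h1 : (∑ᶠ (_ : IsSCC M S), cyclicity M S) = cyclicity M S := by
      rw [finsum_eq_if, if_pos hSCC]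
    rw [← h1]
    exact single_le_finsum (f := fun S' : Set (Fin d) => ∑ᶠ (_ : IsSCC M S'), cyclicity M S')
      S (Set.toFinite _) (fun _ => Nat.zero_le _)
  omega

end Helpers4
section Helpers5
variable {d : ℕ}

lemma fin_succ_val {n : ℕ} (k : Fin (n+1)) : (k + 1).val = (k.val + 1) % (n+1) := by
  rw [Fin.add_def, Fin.val_one' (n+1)]
  show (k.val + 1 % (n+1)) % (n+1) = (k.val + 1) % (n+1)
  conv_rhs => rw [Nat.add_mod]
  rw [Nat.add_mod k.val (1 % (n+1))]
  simp [Nat.mod_mod_of_dvd]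

lemma cycWeight_rot (M : Mat d) {ℓ : ℕ} (c : Fin (ℓ+1) → Fin d) (t : Fin (ℓ+1)) :
    cycWeight M (fun k => c (k + t)) = cycWeight M c := by
  rw [cycWeight, cycWeight]
  refine Fintype.sum_equiv (Equiv.addRight t)
    (fun k => M (c (k + t)) (c (k + 1 + t))) (fun k => M (c k) (c (k + 1))) ?_ |>.symm ▸ ?_
  · intro k
    simp [Equiv.addRight]
    rw [add_right_comm]
  · rfl

lemma cycWeight_split (M : Mat d) (a e : ℕ) (c : Fin (a+1+e+1) → Fin d)
    (hc : c 0 = c ⟨a+1, by omega⟩) :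
    cycWeight M c =
      cycWeight M (fun k : Fin (a+1) => c ⟨k.val, by omega⟩) +
      cycWeight M (fun k : Fin (e+1) => c ⟨a+1+k.val, by omega⟩) := by
  have hn : 0 < a+1+e+1 := by omega
  set F : ℕ → Zmax := fun k =>
    M (c ⟨k % (a+1+e+1), Nat.mod_lt _ hn⟩) (c ⟨(k+1) % (a+1+e+1), Nat.mod_lt _ hn⟩) with hF
  have hmain : cycWeight M c = ∑ k ∈ Finset.range (a+1+e+1), F k := by
    rw [cycWeight, ← Fin.sum_univ_eq_sum_range F (a+1+e+1)]
    apply Finset.sum_congr rfl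
    intro k _
    rw [hF]
    beta_reduce
    congr 1
    · refine congrArg c (Fin.ext ?_)
      exact (Nat.mod_eq_of_lt k.isLt).symm
    · refine congrArg c (Fin.ext ?_)
      exact fin_succ_val k
  have h1 : cycWeight M (fun k : Fin (a+1) => c ⟨k.val, by omega⟩)
      = ∑ k ∈ Finset.range (a+1), F k := by
    rw [cycWeight, ← Fin.sum_univ_eq_sum_range F (a+1)]
    apply Finset.sum_congr rfl
    intro k _
    rw [hF]
    beta_reduce
    have hk1 : k.val % (a+1+e+1) = k.val := Nat.mod_eq_of_lt (by omega)
    have hv : ((k + 1 : Fin (a+1))).val = (k.val + 1) % (a+1) := fin_succ_val k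
    congr 1
    · refine congrArg c (Fin.ext ?_)
      exact hk1.symm
    · rcases Nat.lt_or_ge (k.val + 1) (a+1) with h | h
      · refine congrArg c (Fin.ext ?_)
        show ((k + 1 : Fin (a+1))).val = (k.val+1) % (a+1+e+1)
        rw [hv, Nat.mod_eq_of_lt h, Nat.mod_eq_of_lt (by omega)]
      · have hka : k.val = a := by omega
        have hvz : ((k + 1 : Fin (a+1))).val = 0 := by rw [hv, hka, Nat.mod_self]
        refine (congrArg c (Fin.ext ?_)).trans
          (hc.trans (congrArg c (Fin.ext ?_)))
        · show ((k + 1 : Fin (a+1))).val = (0 : Fin (a+1+e+1)).val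
          rw [hvz]
          rfl
        · show a + 1 = (k.val+1) % (a+1+e+1)
          rw [hka]
          exact (Nat.mod_eq_of_lt (by omega)).symm
  have h2 : cycWeight M (fun k : Fin (e+1) => c ⟨a+1+k.val, by omega⟩)
      = ∑ k ∈ Finset.range (e+1), (fun k => F (a+1+k)) k := by
    rw [cycWeight, ← Fin.sum_univ_eq_sum_range (fun k => F (a+1+k)) (e+1)]
    apply Finset.sum_congr rfl
    intro k _
    rw [hF]
    beta_reduce
    have hk1 : (a+1+k.val) % (a+1+e+1) = a+1+k.val := Nat.mod_eq_of_lt (by omega)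
    have hv : ((k + 1 : Fin (e+1))).val = (k.val + 1) % (e+1) := fin_succ_val k
    congr 1
    · refine congrArg c (Fin.ext ?_)
      exact hk1.symm
    · rcases Nat.lt_or_ge (k.val + 1) (e+1) with h | h
      · refine congrArg c (Fin.ext ?_)
        show a+1+((k + 1 : Fin (e+1))).val = (a+1+k.val+1) % (a+1+e+1)
        rw [hv, Nat.mod_eq_of_lt (by omega), Nat.mod_eq_of_lt (by omega)]
        omega
      · have hke : k.val = e := by omega
        have hvz : ((k + 1 : Fin (e+1))).val = 0 := by rw [hv, hke, Nat.mod_self]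
        refine (congrArg c (Fin.ext ?_)).trans
          ((hc.symm).trans (congrArg c (Fin.ext ?_)))
        · show a+1+((k + 1 : Fin (e+1))).val = a+1
          rw [hvz]
        · show (0 : Fin (a+1+e+1)).val = (a+1+k.val+1) % (a+1+e+1)
          rw [hke]
          show 0 = (a+1+e+1) % (a+1+e+1)
          rw [Nat.mod_self]
  rw [hmain, h1, h2]
  rw [show a+1+e+1 = (a+1) + (e+1) by omega]
  rw [Finset.range_eq_Ico, ← Finset.sum_Ico_consecutive F (by omega : 0 ≤ a+1) (by omega),
    ← Finset.range_eq_Ico, Finset.sum_Ico_eq_sum_range]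
  congr 1
  rw [show (a+1) + (e+1) - (a+1) = e+1 by omega]

end Helpers5
section Helpers6
variable {d : ℕ}

lemma mediant_le {z₁ z₂ p q : ℝ} (hp : 0 < p) (hq : 0 < q) (h : z₁/p ≤ z₂/q) :
    (z₁+z₂)/(p+q) ≤ z₂/q := by
  rw [div_le_div_iff₀ (by linarith) hq]
  rw [div_le_div_iff₀ hp hq] at h
  nlinarith

lemma mediant_le' {z₁ z₂ p q : ℝ} (hp : 0 < p) (hq : 0 < q) (h : z₂/q ≤ z₁/p) :
    (z₁+z₂)/(p+q) ≤ z₁/p := by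
  have := mediant_le hq hp h
  calc (z₁+z₂)/(p+q) = (z₂+z₁)/(q+p) := by ring_nf
    _ ≤ z₁/p := this

lemma cycle_bound (M : Mat d) : ∀ (n ℓ : ℕ), ℓ < n → ∀ (c : Fin (ℓ+1) → Fin d) (w : ℤ),
    cycWeight M c = (w : Zmax) →
    ∃ (ℓ' : ℕ) (c' : Fin (ℓ'+1) → Fin d) (w' : ℤ), ℓ' < d ∧ cycWeight M c' = (w' : Zmax) ∧
      (w : ℝ)/((ℓ:ℝ)+1) ≤ (w' : ℝ)/((ℓ':ℝ)+1) := by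
  intro n
  induction n using Nat.strong_induction_on with
  | _ n IH =>
  intro ℓ hℓ c w hw
  rcases Nat.lt_or_ge ℓ d with hsmall | hbig
  · exact ⟨ℓ, c, w, hsmall, hw, le_refl _⟩
  · have hninj : ¬ Function.Injective c := by
      intro hinj
      have := Fintype.card_le_of_injective c hinj
      simp only [Fintype.card_fin] at this
      omega
    rw [Function.not_injective_iff] at hninj
    obtain ⟨i, j, hcij, hij⟩ := hninj
    set c' : Fin (ℓ+1) → Fin d := fun k => c (k + i) with hc'
    have hw' : cycWeight M c' = (w : Zmax) := by rw [hc', cycWeight_rot M c i, hw]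
    have h0 : c' 0 = c' (j - i) := by
      show c (0 + i) = c (j - i + i)
      rw [zero_add, sub_add_cancel]
      exact hcij
    set m := (j - i : Fin (ℓ+1)).val with hm
    have hm0 : m ≠ 0 := by
      intro h
      apply hij
      have hji : j - i = 0 := Fin.ext h
      have := congrArg (· + i) hji
      exact (by simpa [sub_add_cancel] using this : j = i).symm
    have hmℓ : m ≤ ℓ := by
      have := (j - i).isLt
      omega
    obtain ⟨a, ha⟩ : ∃ a, m = a + 1 := ⟨m - 1, by omega⟩
    obtain ⟨e, he⟩ : ∃ e, ℓ = a + 1 + e := ⟨ℓ - (a+1), by omega⟩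
    subst he
    have h0' : c' 0 = c' ⟨a+1, by omega⟩ := by
      rw [h0]
      refine congrArg c' (Fin.ext ?_)
      rw [← hm, ha]
    have hsplit := cycWeight_split M a e c' h0'
    rw [hw'] at hsplit
    set W₁ := cycWeight M (fun k : Fin (a+1) => c' ⟨k.val, by omega⟩) with hW₁
    set W₂ := cycWeight M (fun k : Fin (e+1) => c' ⟨a+1+k.val, by omega⟩) with hW₂
    have hb₁ : W₁ ≠ ⊥ := by
      intro hb
      rw [hb] at hsplit
      rw [show (⊥ : Zmax) + W₂ = ⊥ from WithBot.add_eq_bot.2 (Or.inl rfl)] at hsplit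
      exact WithBot.coe_ne_bot hsplit
    have hb₂ : W₂ ≠ ⊥ := by
      intro hb
      rw [hb] at hsplit
      rw [show W₁ + (⊥ : Zmax) = ⊥ from WithBot.add_eq_bot.2 (Or.inr rfl)] at hsplit
      exact WithBot.coe_ne_bot hsplit
    obtain ⟨z₁, hz₁⟩ := WithBot.ne_bot_iff_exists.1 hb₁
    obtain ⟨z₂, hz₂⟩ := WithBot.ne_bot_iff_exists.1 hb₂
    have hwz : w = z₁ + z₂ := by
      rw [← hz₁, ← hz₂, ← WithBot.coe_add] at hsplit
      exact_mod_cast hsplit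
    have hp : (0:ℝ) < (a:ℝ)+1 := by positivity
    have hq : (0:ℝ) < (e:ℝ)+1 := by positivity
    rcases le_total ((z₁:ℝ)/((a:ℝ)+1)) ((z₂:ℝ)/((e:ℝ)+1)) with hcmp | hcmp
    · obtain ⟨ℓ', cbest, w', hℓ', hc'', hle⟩ :=
        IH (e+1) (by omega) e (by omega) _ z₂ hz₂.symm
      refine ⟨ℓ', cbest, w', hℓ', hc'', le_trans ?_ hle⟩
      have := mediant_le hp hq hcmp
      calc (w:ℝ)/(((a+1+e:ℕ):ℝ)+1) = ((z₁:ℝ)+(z₂:ℝ))/(((a:ℝ)+1)+((e:ℝ)+1)) := by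
            rw [hwz]; push_cast; ring_nf
        _ ≤ (z₂:ℝ)/((e:ℝ)+1) := this
    · obtain ⟨ℓ', cbest, w', hℓ', hc'', hle⟩ :=
        IH (a+1) (by omega) a (by omega) _ z₁ hz₁.symm
      refine ⟨ℓ', cbest, w', hℓ', hc'', le_trans ?_ hle⟩
      have := mediant_le' hp hq hcmp
      calc (w:ℝ)/(((a+1+e:ℕ):ℝ)+1) = ((z₁:ℝ)+(z₂:ℝ))/(((a:ℝ)+1)+((e:ℝ)+1)) := by
            rw [hwz]; push_cast; ring_nf
        _ ≤ (z₁:ℝ)/((a:ℝ)+1) := this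

end Helpers6
section Helpers7
variable {d : ℕ}

lemma natCast_EReal_pos (ℓ : ℕ) : (0 : EReal) < ((ℓ+1 : ℕ) : EReal) := by
  rw [← EReal.coe_coe_eq_natCast]
  exact EReal.coe_pos.2 (by exact_mod_cast Nat.succ_pos ℓ)

lemma natCast_EReal_ne_top (ℓ : ℕ) : ((ℓ+1 : ℕ) : EReal) ≠ ⊤ := by
  rw [← EReal.coe_coe_eq_natCast]
  exact EReal.coe_ne_top _

lemma z2e_div_nat (w : ℤ) (ℓ : ℕ) :
    z2e (w : Zmax) / ((ℓ+1 : ℕ) : EReal) = (((w : ℝ)/((ℓ : ℝ)+1) : ℝ) : EReal) := by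
  rw [z2e_coe, ← EReal.coe_coe_eq_natCast, ← EReal.coe_div]
  congr 2
  push_cast
  ring

lemma exists_critCycle {M : Mat d} {ℓ₀ : ℕ} {c₀ : Fin (ℓ₀+1) → Fin d}
    (h₀ : cycWeight M c₀ ≠ ⊥) :
    ∃ (ℓ : ℕ) (c : Fin (ℓ+1) → Fin d), IsCritCycle M c := by
  classical
  obtain ⟨w₀, hw₀⟩ := WithBot.ne_bot_iff_exists.1 h₀
  obtain ⟨ℓ₁, c₁, w₁, hℓ₁, hc₁, hle₁⟩ := cycle_bound M (ℓ₀+1) ℓ₀ (by omega) c₀ w₀ hw₀.symm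
  set A : Finset (Σ ℓ' : Fin d, (Fin (ℓ'.val+1) → Fin d)) :=
    Finset.univ.filter (fun t => cycWeight M t.2 ≠ ⊥) with hA
  have hmemA : (⟨⟨ℓ₁, hℓ₁⟩, c₁⟩ : Σ ℓ' : Fin d, (Fin (ℓ'.val+1) → Fin d)) ∈ A := by
    rw [hA, Finset.mem_filter]
    exact ⟨Finset.mem_univ _, by rw [hc₁]; exact WithBot.coe_ne_bot⟩
  set val : (Σ ℓ' : Fin d, (Fin (ℓ'.val+1) → Fin d)) → ℝ :=
    fun t => ((WithBot.unbotD 0 (cycWeight M t.2) : ℤ) : ℝ)/((t.1.val : ℝ)+1) with hvaldef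
  obtain ⟨t, htA, hmax⟩ := A.exists_max_image val ⟨_, hmemA⟩
  have htne : cycWeight M t.2 ≠ ⊥ := (Finset.mem_filter.1 htA).2
  obtain ⟨ws, hws⟩ := WithBot.ne_bot_iff_exists.1 htne
  set r : ℝ := (ws : ℝ)/((t.1.val : ℝ)+1) with hr
  have hvalt : val t = r := by
    rw [hvaldef]
    beta_reduce
    rw [← hws, hr]
    simp
  have hrho : rho M = (r : EReal) := by
    apply le_antisymm
    · rw [rho]
      apply iSup_le
      intro ℓ
      apply iSup_le
      intro c
      rcases eq_or_ne (cycWeight M c) ⊥ with hb | hb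
      · rw [hb, z2e_bot, EReal.bot_div_of_pos_ne_top (natCast_EReal_pos ℓ) (natCast_EReal_ne_top ℓ)]
        exact bot_le
      · obtain ⟨w, hw⟩ := WithBot.ne_bot_iff_exists.1 hb
        obtain ⟨ℓ', c', w', hℓ', hc', hle⟩ := cycle_bound M (ℓ+1) ℓ (by omega) c w hw.symm
        have hmem' : (⟨⟨ℓ', hℓ'⟩, c'⟩ : Σ ℓ' : Fin d, (Fin (ℓ'.val+1) → Fin d)) ∈ A := by
          rw [hA, Finset.mem_filter]
          exact ⟨Finset.mem_univ _, by rw [hc']; exact WithBot.coe_ne_bot⟩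
        have hval' : val ⟨⟨ℓ', hℓ'⟩, c'⟩ = (w' : ℝ)/((ℓ' : ℝ)+1) := by
          rw [hvaldef]
          beta_reduce
          rw [hc']
          simp
        rw [← hw, z2e_div_nat]
        rw [EReal.coe_le_coe_iff]
        refine le_trans hle ?_
        rw [← hval', ← hvalt]
        exact hmax _ hmem'
    · rw [show (r : EReal) = z2e (cycWeight M t.2) / ((t.1.val+1 : ℕ) : EReal) by
        rw [← hws, z2e_div_nat]]
      rw [rho]
      exact le_iSup_of_le t.1.val (le_iSup_of_le t.2 (le_refl _))
  exact ⟨t.1.val, t.2, htne, by rw [hrho, ← hws, z2e_div_nat]⟩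

lemma urk_zero_mortal {Γ : Set (Mat d)} {M : Mat d} (hM : M ∈ semi Γ) (h : urk M = 0)
    (hd : 0 < d) : ∃ N ∈ semi Γ, ∀ i j, N i j = ⊥ := by
  refine ⟨tpow M d, semi_tpow hM hd, ?_⟩
  intro i j
  by_contra hne
  obtain ⟨p, hp0, hpd, hpe⟩ := tpow_path M d i j hne
  obtain ⟨ℓ, c, hc⟩ := path_cycle M p hpe
  obtain ⟨ℓc, cc, hcrit⟩ := exists_critCycle hc
  exact urk_ne_zero_of_critCycle hcrit h

end Helpers7
section Helpers8
variable {d : ℕ}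

lemma tnorm_bot {M : Mat d} (h : ∀ i j, M i j = ⊥) : tnorm M = ⊥ := by
  rw [tnorm]
  exact (Finset.sup_eq_bot_iff _ _).2 fun i _ =>
    (Finset.sup_eq_bot_iff _ _).2 fun j _ => h i j

lemma entry_le_tnorm (M : Mat d) (i j : Fin d) : M i j ≤ tnorm M := by
  rw [tnorm]
  refine le_trans ?_ (Finset.le_sup (f := fun i => Finset.univ.sup fun j => M i j)
    (Finset.mem_univ i))
  exact Finset.le_sup (Finset.mem_univ j)

lemma jsr_bot_of_mortal {Γ : Set (Mat d)} (h : ∃ M ∈ semi Γ, ∀ i j, M i j = ⊥) :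
    jsr Γ = ⊥ := by
  obtain ⟨M, ⟨L, hL, hmem, hprod⟩, hmort⟩ := h
  have hlen : 0 < L.length := List.length_pos_iff.2 hL
  obtain ⟨k, hk⟩ : ∃ k, L.length = k + 1 := ⟨L.length - 1, by omega⟩
  have hmin : minNorm Γ L.length ≤ ⊥ := by
    apply sInf_le
    refine ⟨L, rfl, hmem, ?_⟩
    rw [hprod, tnorm_bot hmort, z2e_bot, hk,
      EReal.bot_div_of_pos_ne_top (natCast_EReal_pos k) (natCast_EReal_ne_top k)]
  have hjsr : jsr Γ ≤ minNorm Γ L.length :=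
    iInf_le_of_le L.length (iInf_le _ hlen)
  exact le_bot_iff.1 (hjsr.trans hmin)

lemma exists_lower_bound {Γ : Set (Mat d)} (hfin : Γ.Finite) :
    ∃ B : ℤ, ∀ A ∈ Γ, ∀ i j, A i j ≠ ⊥ → (B : Zmax) ≤ A i j := by
  refine Set.Finite.induction_on
    (motive := fun Γ' _ => ∃ B : ℤ, ∀ A ∈ Γ', ∀ i j, A i j ≠ ⊥ → (B : Zmax) ≤ A i j) Γ hfin
    ⟨0, fun A hA => hA.elim⟩ ?_
  intro A Γ' _ _ ih
  · obtain ⟨B', hB'⟩ := ih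
    set BA : ℤ := -((Finset.univ.sup
      fun p : Fin d × Fin d => (WithBot.unbotD 0 (A p.1 p.2)).natAbs : ℕ) : ℤ) with hBA
    refine ⟨min B' BA, ?_⟩
    intro A' hA' i j hne
    rcases Set.mem_insert_iff.1 hA' with rfl | hmem
    · obtain ⟨z, hz⟩ := WithBot.ne_bot_iff_exists.1 hne
      have hle : z.natAbs ≤ Finset.univ.sup
          fun p : Fin d × Fin d => (WithBot.unbotD 0 (A' p.1 p.2)).natAbs := by
        refine le_trans (le_of_eq ?_) (Finset.le_sup (Finset.mem_univ (i, j)))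
        rw [← hz]
        simp
      have hzB : BA ≤ z := by
        rw [hBA]
        have : (z.natAbs : ℤ) ≤ ((Finset.univ.sup
          fun p : Fin d × Fin d => (WithBot.unbotD 0 (A' p.1 p.2)).natAbs : ℕ) : ℤ) := by
          exact_mod_cast hle
        omega
      rw [← hz]
      exact_mod_cast le_trans (min_le_right B' BA) hzB
    · refine le_trans ?_ (hB' A' hmem i j hne)
      exact_mod_cast min_le_left B' BA

lemma prodL_lower {Γ : Set (Mat d)} (B : ℤ)
    (hB : ∀ A ∈ Γ, ∀ i j, A i j ≠ ⊥ → (B : Zmax) ≤ A i j) :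
    ∀ L : List (Mat d), L ≠ [] → (∀ N ∈ L, N ∈ Γ) → ∀ i j, prodL L i j ≠ ⊥ →
      (((L.length : ℤ) * B : ℤ) : Zmax) ≤ prodL L i j := by
  intro L
  induction L with
  | nil => intro h; exact absurd rfl h
  | cons M L' ih =>
    intro _ hmem i j hne
    cases L' with
    | nil =>
      simpa [prodL] using hB M (hmem M (by simp)) i j (by simpa [prodL] using hne)
    | cons N L'' =>
      rw [prodL_cons M (N :: L'') (by simp)] at hne ⊢
      have hex : ∃ k, M i k + prodL (N :: L'') k j ≠ ⊥ := by
        by_contra hall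
        push_neg at hall
        exact hne ((Finset.sup_eq_bot_iff _ Finset.univ).2 fun k _ => hall k)
      obtain ⟨k, hk⟩ := hex
      rw [ne_eq, WithBot.add_eq_bot] at hk
      push_neg at hk
      have h1 : (B : Zmax) ≤ M i k := hB M (hmem M (by simp)) i k hk.1
      have h2 : ((((N :: L'').length : ℤ) * B : ℤ) : Zmax) ≤ prodL (N :: L'') k j :=
        ih (by simp) (fun P hP => hmem P (by simp [hP])) k j hk.2
      have h3 : ((((M :: N :: L'').length : ℤ) * B : ℤ) : Zmax)
          ≤ M i k + prodL (N :: L'') k j := by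
        have := add_le_add h1 h2
        rw [← WithBot.coe_add] at this
        refine le_trans (le_of_eq ?_) this
        rw [WithBot.coe_inj]
        push_cast [List.length_cons]
        ring
      exact le_trans h3 (Finset.le_sup (f := fun k => M i k + prodL (N :: L'') k j)
        (Finset.mem_univ k))

lemma jsr_lower {Γ : Set (Mat d)} (B : ℤ)
    (hB : ∀ A ∈ Γ, ∀ i j, A i j ≠ ⊥ → (B : Zmax) ≤ A i j)
    (hnm : ¬ ∃ M ∈ semi Γ, ∀ i j, M i j = ⊥) :
    (((B : ℝ)) : EReal) ≤ jsr Γ := by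
  apply le_iInf
  intro ℓ
  apply le_iInf
  intro hℓ
  apply le_sInf
  rintro x ⟨L, hlen, hmem, rfl⟩
  have hLne : L ≠ [] := by
    intro h
    rw [h] at hlen
    simp at hlen
    omega
  have hnotmort : ¬ ∀ i j, prodL L i j = ⊥ := by
    intro hall
    exact hnm ⟨prodL L, ⟨L, hLne, hmem, rfl⟩, hall⟩
  push_neg at hnotmort
  obtain ⟨i, j, hij⟩ := hnotmort
  have hent := prodL_lower B hB L hLne hmem i j hij
  have htn : (((L.length : ℤ) * B : ℤ) : Zmax) ≤ tnorm (prodL L) :=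
    le_trans hent (entry_le_tnorm _ i j)
  have hz : ((((L.length : ℤ) * B : ℤ) : ℝ) : EReal) ≤ z2e (tnorm (prodL L)) := by
    have := z2e_mono htn
    rwa [z2e_coe] at this
  obtain ⟨k, hk⟩ : ∃ k, ℓ = k + 1 := ⟨ℓ - 1, by omega⟩
  subst hk
  have hdiv := EReal.div_le_div_right_of_nonneg (c := ((k+1 : ℕ) : EReal))
    (le_of_lt (natCast_EReal_pos k)) hz
  refine le_trans (le_of_eq ?_) hdiv
  rw [← EReal.coe_coe_eq_natCast, ← EReal.coe_div, EReal.coe_eq_coe_iff]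
  rw [hlen]
  push_cast
  rw [mul_comm, mul_div_assoc, div_self (by positivity), mul_one]

end Helpers8
theorem stmt_18 {d : ℕ} (Γ : Set (Mat d)) (hfin : Γ.Finite) (hne : Γ.Nonempty) :
    (sInf (urk '' semi Γ) = 0 ↔ jsr Γ = ⊥) ∧
    (sInf (urk '' semi Γ) = 0 ↔ ∃ M ∈ semi Γ, ∀ i j, M i j = ⊥) := by
  classical
  have hP2 : sInf (urk '' semi Γ) = 0 ↔ ∃ M ∈ semi Γ, ∀ i j, M i j = ⊥ := by
    constructor
    · intro h
      obtain ⟨A, hA⟩ := hne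
      have hsemi_ne : (semi Γ).Nonempty := ⟨A, [A], by simp, by simp [hA], rfl⟩
      have himg : (urk '' semi Γ).Nonempty := hsemi_ne.image _
      rcases Nat.sInf_eq_zero.1 h with h0 | hemp
      · obtain ⟨M, hM, hurk⟩ := h0
        rcases Nat.eq_zero_or_pos d with hd | hd
        · subst hd
          exact ⟨M, hM, fun i => i.elim0⟩
        · exact urk_zero_mortal hM hurk hd
      · exact absurd hemp himg.ne_empty
    · rintro ⟨M, hM, hmort⟩
      exact Nat.sInf_eq_zero.2 (Or.inl ⟨M, hM, urk_eq_zero_of_mortal hmort⟩)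
  have hP1 : jsr Γ = ⊥ ↔ ∃ M ∈ semi Γ, ∀ i j, M i j = ⊥ := by
    constructor
    · intro h
      by_contra hnm
      obtain ⟨B, hB⟩ := exists_lower_bound hfin
      have hlow := jsr_lower B hB hnm
      rw [h] at hlow
      exact absurd (le_bot_iff.1 hlow) (EReal.coe_ne_bot _)
    · exact jsr_bot_of_mortal
  exact ⟨hP2.trans hP1.symm, hP2⟩
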